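/- Let m ≥ 1 and let β be a nonnegative integer. Let Γ_β be the set of m × m matrices γ with nonnegative real entries such that every row sum equals 1 and every column sum is at most 1 + β. Then Γ_β equals the convex hull of the set of matrices in Γ_β all of whose entries lie in {0, 1}. -/

import Mathlib

open MeasureTheory Metric Set
open scoped ENNReal

noncomputable section

/-- The topological support of a Borel measure: the smallest closed set of full measure,
realized as the intersection of all closed sets whose complement is null. -/
def msupport {X : Type*} [TopologicalSpace X] [MeasurableSpace X] (μ : Measure X) : Set X :=
  ⋂₀ {S : Set X | IsClosed S ∧ μ Sᶜ = 0}

/-- The symmetric support difference (SSD) divergence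
`D_△(p, q) = ∫ d(x, supp q) dp + ∫ d(x, supp p) dq` (valued in `ℝ≥0∞`). -/
def Dtri {X : Type*} [MeasurableSpace X] [PseudoMetricSpace X] (p q : Measure X) : ℝ≥0∞ :=
  (∫⁻ x, ENNReal.ofReal (infDist x (msupport q)) ∂p) +
  (∫⁻ x, ENNReal.ofReal (infDist x (msupport p)) ∂q)

/-- The Wasserstein-1 distance: infimum of `∫ d(x, y) dγ` over couplings of `p` and `q`. -/
def DW {X : Type*} [MeasurableSpace X] [PseudoMetricSpace X] (p q : Measure X) : ℝ≥0∞ :=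
  ⨅ γ ∈ {γ : Measure (X × X) | γ.map Prod.fst = p ∧ γ.map Prod.snd = q},
    ∫⁻ z, ENNReal.ofReal (dist z.1 z.2) ∂γ

/-- The β-admissible Wasserstein distance: infimum of `∫ d(x, y) dγ` over measures `γ`
whose first marginal is `p` and whose second marginal is `≤ (1 + β) • q`. -/
def DWbeta {X : Type*} [MeasurableSpace X] [PseudoMetricSpace X]
    (β : ℝ) (p q : Measure X) : ℝ≥0∞ :=
  ⨅ γ ∈ {γ : Measure (X × X) |
      γ.map Prod.fst = p ∧ γ.map Prod.snd ≤ (ENNReal.ofReal (1 + β)) • q},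
    ∫⁻ z, ENNReal.ofReal (dist z.1 z.2) ∂γ

/-- The symmetrized (β₁, β₂)-admissible Wasserstein distance. -/
def DWsym {X : Type*} [MeasurableSpace X] [PseudoMetricSpace X]
    (β₁ β₂ : ℝ) (p q : Measure X) : ℝ≥0∞ :=
  DWbeta β₁ p q + DWbeta β₂ q p

/-- The polytope `Γ_β` of m × m matrices with nonnegative entries, row sums equal to 1, and
column sums at most `1 + β`. -/
def GammaBeta (m : ℕ) (β : ℕ) : Set (Matrix (Fin m) (Fin m) ℝ) :=
  {γ | (∀ i j, 0 ≤ γ i j) ∧ (∀ i, ∑ j, γ i j = 1) ∧ (∀ j, ∑ i, γ i j ≤ 1 + (β : ℝ))}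

lemma sum_fin_ite (n : ℕ) (A C : ℝ) :
    ∑ k : Fin (n+1), (if k = 0 then A else C) = A + n * C := by
  have h : ∀ k : Fin (n+1), (if k = 0 then A else C) = C + (if k = 0 then A - C else 0) := by
    intro k; split <;> ring
  simp only [h, Finset.sum_add_distrib, Finset.sum_const, Finset.sum_ite_eq',
    Finset.mem_univ, if_true, Finset.card_univ, Fintype.card_fin]
  ring

/-- The linear map collapsing the `β+1` column copies back to an `m × m` matrix. -/
def collapseMap (m β : ℕ) :
    Matrix (Fin m × Fin (β+1)) (Fin m × Fin (β+1)) ℝ →ₗ[ℝ] Matrix (Fin m) (Fin m) ℝ where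
  toFun M := Matrix.of fun i j => ∑ l : Fin (β+1), M (i, 0) (j, l)
  map_add' M N := by ext i j; simp [Finset.sum_add_distrib]
  map_smul' c M := by ext i j; simp [Finset.mul_sum]

/-- **generalized Birkhoff–von Neumann.** `Γ_β` is the convex hull of its 0–1
(hard-assignment) matrices. -/
theorem gammaBeta_eq_convexHull_hard_assignments (m : ℕ) (hm : 1 ≤ m) (β : ℕ) :
    GammaBeta m β =
      convexHull ℝ {γ ∈ GammaBeta m β | ∀ i j, γ i j = 0 ∨ γ i j = 1} := by
  classical
  apply Set.Subset.antisymm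
  · intro γ hγ
    obtain ⟨hpos, hrow, hcol⟩ := hγ
    have hb0 : (0:ℝ) < (β:ℝ) + 1 := by positivity
    have hbne : (β:ℝ) + 1 ≠ 0 := by positivity
    have hs_nonneg : ∀ j, (0:ℝ) ≤ ∑ i, γ i j := fun j => Finset.sum_nonneg fun i _ => hpos i j
    have hs_le : ∀ j, ∑ i, γ i j ≤ (β:ℝ) + 1 := fun j => by linarith [hcol j]
    have hsum_s : ∑ j, ∑ i, γ i j = (m : ℝ) := by
      rw [Finset.sum_comm]; simp [hrow]
    have hcol1 : β = 0 → ∀ j, ∑ i, γ i j = 1 := by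
      intro h0 j
      have hle : ∀ j ∈ Finset.univ, ∑ i, γ i j ≤ (1:ℝ) := fun j _ => by
        have := hcol j; rw [h0] at this; simpa using this
      have heq : (∑ j : Fin m, ∑ i, γ i j) = ∑ j : Fin m, (1:ℝ) := by
        rw [hsum_s]; simp
      exact (Finset.sum_eq_sum_iff_of_le hle).1 heq j (Finset.mem_univ j)
    set M : Matrix (Fin m × Fin (β+1)) (Fin m × Fin (β+1)) ℝ :=
      fun p q => if p.2 = 0 then γ p.1 q.1 / ((β:ℝ) + 1)
        else (1 - (∑ i, γ i q.1) / ((β:ℝ) + 1)) / ((m:ℝ) * (β:ℝ)) with hMdef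
    have hmne : (m:ℝ) ≠ 0 := Nat.cast_ne_zero.2 (by omega)
    have hMds : M ∈ doublyStochastic ℝ (Fin m × Fin (β+1)) := by
      rw [mem_doublyStochastic_iff_sum]
      refine ⟨?_, ?_, ?_⟩
      · rintro ⟨i, k⟩ ⟨j, l⟩
        dsimp [M]
        split
        · exact div_nonneg (hpos _ _) hb0.le
        · apply div_nonneg
          · have h1 : (∑ i, γ i j) / ((β:ℝ) + 1) ≤ 1 := by
              rw [div_le_one hb0]; exact hs_le j
            linarith
          · positivity
      · rintro ⟨i, k⟩
        rw [Fintype.sum_prod_type]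
        dsimp [M]
        rcases eq_or_ne k 0 with hk | hk
        · simp only [hk, eq_self_iff_true, if_true, Finset.sum_const, Finset.card_univ,
            Fintype.card_fin, nsmul_eq_mul]
          rw [← Finset.mul_sum, ← Finset.sum_div, hrow i]
          push_cast
          field_simp
        · have hβpos : 0 < β := by
            rcases Nat.eq_zero_or_pos β with h0 | h0
            · exfalso; subst h0; exact hk (Fin.ext (Nat.lt_one_iff.1 k.is_lt))
            · exact h0
          have hβne : (β:ℝ) ≠ 0 := Nat.cast_ne_zero.2 (by omega)
          simp only [if_neg hk, Finset.sum_const, Finset.card_univ, Fintype.card_fin,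
            nsmul_eq_mul]
          rw [← Finset.mul_sum, ← Finset.sum_div, Finset.sum_sub_distrib, ← Finset.sum_div, hsum_s]
          simp only [Finset.sum_const, Finset.card_univ, Fintype.card_fin, nsmul_eq_mul,
            mul_one]
          push_cast
          field_simp
          ring
      · rintro ⟨j, l⟩
        rw [Fintype.sum_prod_type]
        dsimp [M]
        have hsplit : ∀ i : Fin m, (∑ k : Fin (β+1), if k = 0 then γ i j / ((β:ℝ) + 1)
              else (1 - (∑ i, γ i j) / ((β:ℝ) + 1)) / ((m:ℝ) * (β:ℝ)))
            = γ i j / ((β:ℝ) + 1) + (β:ℝ) * ((1 - (∑ i, γ i j) / ((β:ℝ) + 1)) / ((m:ℝ) * (β:ℝ))) :=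
          fun i => sum_fin_ite β _ _
        simp only [hsplit]
        rw [Finset.sum_add_distrib, ← Finset.sum_div, Finset.sum_const, Finset.card_univ,
          Fintype.card_fin, nsmul_eq_mul]
        rcases Nat.eq_zero_or_pos β with h0 | h0
        · subst h0
          simp only [Nat.cast_zero, zero_mul, mul_zero, zero_div, add_zero]
          rw [hcol1 rfl j]
          norm_num
        · have hβne : (β:ℝ) ≠ 0 := Nat.cast_ne_zero.2 (by omega)
          field_simp
          ring
    have hM' : M ∈ convexHull ℝ
        {x | ∃ σ : Equiv.Perm (Fin m × Fin (β+1)), σ.permMatrix ℝ = x} := by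
      rw [← doublyStochastic_eq_convexHull_permMatrix]; exact hMds
    have hγM : collapseMap m β M = γ := by
      ext i j
      show (∑ l : Fin (β+1), M (i, 0) (j, l)) = γ i j
      dsimp [M]
      simp only [eq_self_iff_true, if_true, Finset.sum_const, Finset.card_univ,
        Fintype.card_fin, nsmul_eq_mul]
      push_cast
      field_simp
    have hperm : ∀ (σ : Equiv.Perm (Fin m × Fin (β+1))) (i j : Fin m),
        collapseMap m β (σ.permMatrix ℝ) i j = if (σ (i, 0)).1 = j then 1 else 0 := by
      intro σ i j
      show (∑ l : Fin (β+1), (σ.permMatrix ℝ) (i, 0) (j, l))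
          = if (σ (i, 0)).1 = j then 1 else 0
      simp only [Equiv.Perm.permMatrix, PEquiv.toMatrix_apply, Equiv.toPEquiv_apply,
        Option.mem_def, Option.some.injEq]
      by_cases hA : (σ (i, 0)).1 = j
      · have : ∀ l : Fin (β+1), (σ (i, 0) = (j, l)) ↔ ((σ (i, 0)).2 = l) := by
          intro l
          rw [Prod.ext_iff]
          constructor
          · exact fun h => h.2
          · exact fun h => ⟨hA, h⟩
        simp only [this]
        simp [hA]
      · have : ∀ l : Fin (β+1), ¬ (σ (i, 0) = (j, l)) := by
          intro l h
          exact hA (by rw [h])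
        simp [this, hA]
    have himg : (collapseMap m β) ''
        {x | ∃ σ : Equiv.Perm (Fin m × Fin (β+1)), σ.permMatrix ℝ = x}
        ⊆ {γ ∈ GammaBeta m β | ∀ i j, γ i j = 0 ∨ γ i j = 1} := by
      rintro _ ⟨x, ⟨σ, rfl⟩, rfl⟩
      refine ⟨⟨?_, ?_, ?_⟩, ?_⟩
      · intro i j
        rw [hperm]
        split <;> norm_num
      · intro i
        simp only [hperm]
        simp
      · intro j
        simp only [hperm]
        rw [Finset.sum_boole]
        have hcard : (Finset.univ.filter fun i : Fin m => (σ (i, 0)).1 = j).card ≤ β + 1 := by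
          have h := Finset.card_le_card_of_injOn
            (s := Finset.univ.filter fun i : Fin m => (σ (i, 0)).1 = j)
            (t := (Finset.univ : Finset (Fin (β+1))))
            (fun i : Fin m => (σ (i, 0)).2)
            (fun a _ => Finset.mem_univ _) ?_
          · simpa using h
          · intro a ha c hc hac
            simp only [Finset.coe_filter, Set.mem_setOf_eq] at ha hc
            have h2 : σ (a, 0) = σ (c, 0) := Prod.ext (ha.2.trans hc.2.symm) hac
            exact (Prod.ext_iff.1 (σ.injective h2)).1
        calc ((Finset.univ.filter fun i : Fin m => (σ (i, 0)).1 = j).card : ℝ)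
            ≤ ((β:ℝ) + 1) := by exact_mod_cast hcard
          _ = 1 + (β:ℝ) := by ring
      · intro i j
        rw [hperm]
        split
        · right; rfl
        · left; rfl
    have : collapseMap m β M ∈ convexHull ℝ
        ((collapseMap m β) '' {x | ∃ σ : Equiv.Perm (Fin m × Fin (β+1)), σ.permMatrix ℝ = x}) := by
      rw [← LinearMap.image_convexHull]
      exact Set.mem_image_of_mem _ hM'
    rw [← hγM]
    exact convexHull_mono himg this
  · refine convexHull_min (fun x hx => hx.1) ?_
    rintro x ⟨hx0, hx1, hx2⟩ y ⟨hy0, hy1, hy2⟩ a c ha hc hac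
    refine ⟨fun i j => ?_, fun i => ?_, fun j => ?_⟩
    · have h1 := hx0 i j; have h2 := hy0 i j
      simp only [Matrix.add_apply, Matrix.smul_apply, smul_eq_mul]
      positivity
    · simp only [Matrix.add_apply, Matrix.smul_apply, smul_eq_mul,
        Finset.sum_add_distrib, ← Finset.mul_sum, hx1 i, hy1 i]
      linarith
    · simp only [Matrix.add_apply, Matrix.smul_apply, smul_eq_mul,
        Finset.sum_add_distrib, ← Finset.mul_sum]
      have h1 : a * (∑ i, x i j) ≤ a * (1 + (β:ℝ)) :=
        mul_le_mul_of_nonneg_left (hx2 j) ha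
      have h2 : c * (∑ i, y i j) ≤ c * (1 + (β:ℝ)) :=
        mul_le_mul_of_nonneg_left (hy2 j) hc
      nlinarith
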